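/- Let B be a Boolean algebra, C an abstract σ-algebra, and η : B → C a Boolean algebra homomorphism which is universal among Boolean homomorphisms from B into abstract σ-algebras: for every abstract σ-algebra D (in a fixed universe) and every Boolean algebra homomorphism f : B → D there exists a unique σ-morphism g : C → D with g ∘ η = f (so C is the free abstract σ-algebra CB(B) on B). Then for every additive function μ₀ : B → ℝ≥0∞ with values in [0,1] there exists a unique measure μ : C → ℝ≥0∞ with μ ∘ η = μ₀; moreover μ takes values in [0,1]. -/

import Mathlib

open scoped ENNReal

/-- An abstract σ-algebra: a Boolean algebra in which every `ℕ`-indexed family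
has a least upper bound. -/
def IsAbstractSigmaAlgebra (A : Type*) [BooleanAlgebra A] : Prop :=
  ∀ a : ℕ → A, ∃ s, IsLUB (Set.range a) s

/-- A homomorphism of Boolean algebras. -/
def IsBoolHom {A B : Type*} [BooleanAlgebra A] [BooleanAlgebra B] (f : A → B) : Prop :=
  f ⊥ = ⊥ ∧ f ⊤ = ⊤ ∧ (∀ a b, f (a ⊓ b) = f a ⊓ f b) ∧
    (∀ a b, f (a ⊔ b) = f a ⊔ f b) ∧ ∀ a, f aᶜ = (f a)ᶜ

/-- A σ-morphism of abstract σ-algebras: a Boolean homomorphism sending least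
upper bounds of `ℕ`-indexed families to least upper bounds. -/
def IsSigmaMorphism {A B : Type*} [BooleanAlgebra A] [BooleanAlgebra B] (f : A → B) : Prop :=
  IsBoolHom f ∧ ∀ (a : ℕ → A) (s : A), IsLUB (Set.range a) s →
    IsLUB (Set.range fun n => f (a n)) (f s)

/-- A measure on an abstract σ-algebra. -/
def IsMeasureOn {A : Type*} [BooleanAlgebra A] (μ : A → ℝ≥0∞) : Prop :=
  μ ⊥ = 0 ∧ ∀ a : ℕ → A, (∀ i j, i ≠ j → a i ⊓ a j = ⊥) →
    ∀ s, IsLUB (Set.range a) s → μ s = ∑' n, μ (a n)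

universe u v

section Aux
variable {A A' : Type*} [BooleanAlgebra A] [BooleanAlgebra A']

lemma IsBoolHom.monotone {f : A → A'} (hf : IsBoolHom f) : Monotone f := by
  intro x y hxy
  have : f (x ⊔ y) = f x ⊔ f y := hf.2.2.2.1 x y
  rw [sup_eq_right.2 hxy] at this
  exact this ▸ le_sup_left

lemma isBoolHom_id : IsBoolHom (id : A → A) :=
  ⟨rfl, rfl, fun _ _ => rfl, fun _ _ => rfl, fun _ => rfl⟩

lemma isSigmaMorphism_id : IsSigmaMorphism (id : A → A) :=
  ⟨isBoolHom_id, fun a s hs => by simpa using hs⟩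

lemma IsBoolHom.comp {A'' : Type*} [BooleanAlgebra A''] {f : A → A'} {g : A' → A''}
    (hg : IsBoolHom g) (hf : IsBoolHom f) : IsBoolHom (g ∘ f) := by
  refine ⟨?_, ?_, fun a b => ?_, fun a b => ?_, fun a => ?_⟩ <;>
    simp [Function.comp, hf.1, hf.2.1, hf.2.2.1, hf.2.2.2.1, hf.2.2.2.2,
      hg.1, hg.2.1, hg.2.2.1, hg.2.2.2.1, hg.2.2.2.2]

lemma IsSigmaMorphism.comp {A'' : Type*} [BooleanAlgebra A''] {f : A → A'} {g : A' → A''}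
    (hg : IsSigmaMorphism g) (hf : IsSigmaMorphism f) : IsSigmaMorphism (g ∘ f) := by
  refine ⟨hg.1.comp hf.1, fun a s hs => ?_⟩
  exact hg.2 _ _ (hf.2 a s hs)

/-- the two-element sequence `x, y, ⊥, ⊥, …` -/
def pairSeq (x y : A) : ℕ → A := fun n => if n = 0 then x else if n = 1 then y else ⊥

lemma isLUB_pairSeq (x y : A) : IsLUB (Set.range (pairSeq x y)) (x ⊔ y) := by
  constructor
  · rintro t ⟨n, rfl⟩
    rcases n with - | n
    · exact le_sup_left
    rcases n with - | n
    · exact le_sup_right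
    · simp [pairSeq]
  · intro u hu
    have h0 : x ≤ u := hu ⟨0, rfl⟩
    have h1 : y ≤ u := hu ⟨1, rfl⟩
    exact sup_le h0 h1

lemma pairSeq_disj {x y : A} (h : x ⊓ y = ⊥) :
    ∀ i j, i ≠ j → pairSeq x y i ⊓ pairSeq x y j = ⊥ := by
  intro i j hij
  rcases i with - | - | i <;> rcases j with - | - | j <;>
    simp_all [pairSeq, inf_comm, le_bot_iff]

lemma isLUB_inf {a : ℕ → A} {s : A} (h : IsLUB (Set.range a) s) (c : A) :
    IsLUB (Set.range fun n => c ⊓ a n) (c ⊓ s) := by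
  constructor
  · rintro t ⟨n, rfl⟩
    exact inf_le_inf_left c (h.1 ⟨n, rfl⟩)
  · intro u hu
    have hs : s ≤ u ⊔ cᶜ := by
      refine h.2 ?_
      rintro t ⟨n, rfl⟩
      have h1 : a n ⊓ c ≤ u := by
        have := hu ⟨n, rfl⟩
        simpa [inf_comm] using this
      calc a n = (a n ⊓ c) ⊔ (a n ⊓ cᶜ) := by rw [← inf_sup_left, sup_compl_eq_top, inf_top_eq]
      _ ≤ u ⊔ cᶜ := sup_le_sup h1 inf_le_right
    calc c ⊓ s ≤ c ⊓ (u ⊔ cᶜ) := inf_le_inf_left c hs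
    _ = c ⊓ u := by rw [inf_sup_left, inf_compl_eq_bot, sup_bot_eq]
    _ ≤ u := inf_le_right

end Aux

section Meas
variable {A : Type*} [BooleanAlgebra A]

lemma tsum_pairSeq {ν : A → ℝ≥0∞} (h0 : ν ⊥ = 0) (x y : A) :
    ∑' n, ν (pairSeq x y n) = ν x + ν y := by
  rw [tsum_eq_sum (s := ({0, 1} : Finset ℕ))
    (fun b hb => by
      simp only [Finset.mem_insert, Finset.mem_singleton, not_or] at hb
      simp [pairSeq, hb.1, hb.2, h0])]
  rw [Finset.sum_pair (by norm_num)]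
  simp [pairSeq]

lemma IsMeasureOn.pair {ν : A → ℝ≥0∞} (hν : IsMeasureOn ν) {x y : A} (h : x ⊓ y = ⊥) :
    ν (x ⊔ y) = ν x + ν y := by
  rw [hν.2 (pairSeq x y) (pairSeq_disj h) _ (isLUB_pairSeq x y), tsum_pairSeq hν.1]

lemma IsMeasureOn.mono {ν : A → ℝ≥0∞} (hν : IsMeasureOn ν) : Monotone ν := by
  intro x y hxy
  have hx : x ⊔ (y ⊓ xᶜ) = y := by
    rw [sup_inf_left, sup_compl_eq_top, inf_top_eq, sup_eq_right.2 hxy]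
  have hd : x ⊓ (y ⊓ xᶜ) = ⊥ := by
    rw [inf_comm, inf_assoc, compl_inf_eq_bot, inf_bot_eq]
  calc ν x ≤ ν x + ν (y ⊓ xᶜ) := le_self_add
  _ = ν y := by rw [← hν.pair hd, hx]

end Meas

section Mu0
variable {B : Type*} [BooleanAlgebra B] {μ₀ : B → ℝ≥0∞}

lemma mu0_mono (hadd : ∀ a b : B, a ⊓ b = ⊥ → μ₀ (a ⊔ b) = μ₀ a + μ₀ b) :
    Monotone μ₀ := by
  intro x y hxy
  have hx : x ⊔ (y ⊓ xᶜ) = y := by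
    rw [sup_inf_left, sup_compl_eq_top, inf_top_eq, sup_eq_right.2 hxy]
  have hd : x ⊓ (y ⊓ xᶜ) = ⊥ := by
    rw [inf_comm, inf_assoc, compl_inf_eq_bot, inf_bot_eq]
  calc μ₀ x ≤ μ₀ x + μ₀ (y ⊓ xᶜ) := le_self_add
  _ = μ₀ y := by rw [← hadd _ _ hd, hx]

lemma mu0_subadd (hadd : ∀ a b : B, a ⊓ b = ⊥ → μ₀ (a ⊔ b) = μ₀ a + μ₀ b) (x y : B) :
    μ₀ (x ⊔ y) ≤ μ₀ x + μ₀ y := by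
  have hx : x ⊔ (y ⊓ xᶜ) = x ⊔ y := by
    rw [sup_inf_left, sup_compl_eq_top, inf_top_eq]
  have hd : x ⊓ (y ⊓ xᶜ) = ⊥ := by
    rw [inf_comm, inf_assoc, compl_inf_eq_bot, inf_bot_eq]
  calc μ₀ (x ⊔ y) = μ₀ x + μ₀ (y ⊓ xᶜ) := by rw [← hadd _ _ hd, hx]
  _ ≤ μ₀ x + μ₀ y := add_le_add_right (mu0_mono hadd inf_le_left) _

lemma mu0_finset_subadd (h0 : μ₀ ⊥ = 0)
    (hadd : ∀ a b : B, a ⊓ b = ⊥ → μ₀ (a ⊔ b) = μ₀ a + μ₀ b)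
    (F : Finset ℕ) (g : ℕ → B) : μ₀ (F.sup g) ≤ ∑ i ∈ F, μ₀ (g i) := by
  classical
  induction F using Finset.induction with
  | empty => simp [h0]
  | insert a s hx ih =>
      rw [Finset.sup_insert, Finset.sum_insert hx]
      exact (mu0_subadd hadd _ _).trans (add_le_add_right ih _)

end Mu0

/-- the ideal generated by the values of a sequence -/
def idealOfSeq {B : Type*} [BooleanAlgebra B] (bs : ℕ → B) : Order.Ideal B where
  carrier := {a | ∃ F : Finset ℕ, a ≤ F.sup bs}
  lower' := fun u v huv ⟨F, hF⟩ => ⟨F, huv.trans hF⟩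
  nonempty' := ⟨⊥, ∅, bot_le⟩
  directed' := by
    rintro u ⟨F, hF⟩ v ⟨G, hG⟩
    refine ⟨u ⊔ v, ⟨F ∪ G, ?_⟩, le_sup_left, le_sup_right⟩
    exact sup_le (hF.trans (Finset.sup_mono Finset.subset_union_left))
      (hG.trans (Finset.sup_mono Finset.subset_union_right))

lemma mem_idealOfSeq {B : Type*} [BooleanAlgebra B] {bs : ℕ → B} {a : B} :
    a ∈ idealOfSeq bs ↔ ∃ F : Finset ℕ, a ≤ F.sup bs := Iff.rfl

/-- Boolean prime ideal theorem, in the form we need. -/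
lemma exists_hom_prop {B : Type*} [BooleanAlgebra B] {b : B} {bs : ℕ → B}
    (h : ∀ F : Finset ℕ, ¬ b ≤ F.sup bs) :
    ∃ x : B → Prop, IsBoolHom x ∧ x b ∧ ∀ n, ¬ x (bs n) := by
  classical
  set I : Order.Ideal B := idealOfSeq bs with hIdef
  have hdisj : Disjoint ((Order.PFilter.principal b : Order.PFilter B) : Set B) (I : Set B) := by
    rw [Set.disjoint_left]
    rintro a ha hai
    obtain ⟨F, hF⟩ := mem_idealOfSeq.1 hai
    exact h F ((Order.PFilter.mem_principal.1 ha).trans hF)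
  obtain ⟨J, hJprime, hIJ, hJdisj⟩ := DistribLattice.prime_ideal_of_disjoint_filter_ideal hdisj
  refine ⟨fun a => a ∉ J, ⟨?_, ?_, ?_, ?_, ?_⟩, ?_, ?_⟩
  · simp [J.bot_mem]
  · simp [hJprime.toIsProper.top_notMem]
  · intro u v
    have h1 : u ⊓ v ∈ J → u ∈ J ∨ v ∈ J := fun hm => hJprime.mem_or_mem hm
    have h2 : u ∈ J → u ⊓ v ∈ J := fun hu => J.lower inf_le_left hu
    have h3 : v ∈ J → u ⊓ v ∈ J := fun hv => J.lower inf_le_right hv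
    simp only [eq_iff_iff, inf_Prop_eq]
    tauto
  · intro u v
    have h1 := (Order.Ideal.sup_mem_iff (I := J) (x := u) (y := v))
    simp only [eq_iff_iff, sup_Prop_eq]
    tauto
  · intro a
    have h1 : a ∈ J ∨ aᶜ ∈ J := hJprime.mem_or_compl_mem
    have h2 : ¬(a ∈ J ∧ aᶜ ∈ J) := by
      rintro ⟨ha, hac⟩
      exact hJprime.toIsProper.top_notMem
        (by simpa [sup_compl_eq_top] using Order.Ideal.sup_mem ha hac)
    simp only [eq_iff_iff, compl_iff_not]
    tauto
  · exact Set.disjoint_left.1 hJdisj (Order.PFilter.mem_principal.2 le_rfl)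
  · intro n
    simp only [not_not]
    exact hIJ (mem_idealOfSeq.2 ⟨{n}, by simp⟩)

/-- A copy of `Prop` in an arbitrary universe. -/
structure LiftProp : Type v where
  p : Prop

namespace LiftProp

lemma p_injective : Function.Injective (LiftProp.p : LiftProp.{v} → Prop) := by
  rintro ⟨a⟩ ⟨b⟩ h; simpa using h

instance : Max LiftProp.{v} := ⟨fun x y => ⟨x.p ⊔ y.p⟩⟩
instance : Min LiftProp.{v} := ⟨fun x y => ⟨x.p ⊓ y.p⟩⟩
instance : Top LiftProp.{v} := ⟨⟨⊤⟩⟩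
instance : Bot LiftProp.{v} := ⟨⟨⊥⟩⟩
instance : Compl LiftProp.{v} := ⟨fun x => ⟨x.pᶜ⟩⟩
instance : SDiff LiftProp.{v} := ⟨fun x y => ⟨x.p \ y.p⟩⟩
instance : HImp LiftProp.{v} := ⟨fun x y => ⟨x.p ⇨ y.p⟩⟩
instance : LE LiftProp.{v} := ⟨fun x y => x.p ≤ y.p⟩
instance : LT LiftProp.{v} := ⟨fun x y => x.p < y.p⟩

instance : BooleanAlgebra LiftProp.{v} :=
  Function.Injective.booleanAlgebra LiftProp.p p_injective Iff.rfl Iff.rfl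
    (fun _ _ => rfl) (fun _ _ => rfl) rfl rfl (fun _ => rfl) (fun _ _ => rfl) (fun _ _ => rfl)

lemma le_iff {x y : LiftProp.{v}} : x ≤ y ↔ (x.p → y.p) := Iff.rfl

lemma sigma : IsAbstractSigmaAlgebra LiftProp.{v} := by
  intro a
  refine ⟨⟨∃ n, (a n).p⟩, ?_, ?_⟩
  · rintro t ⟨n, rfl⟩
    exact le_iff.2 fun h => ⟨n, h⟩
  · rintro u hu
    exact le_iff.2 fun ⟨n, h⟩ => le_iff.1 (hu ⟨n, rfl⟩) h

lemma bot_p : (⊥ : LiftProp.{v}).p = False := by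
  simp [Bot.bot, Prop.bot_eq_false]

end LiftProp

/-- Any "λ-system" in `C` containing the range of `η` is everything. -/
theorem lambda_univ {B : Type u} {C : Type v}
    [BooleanAlgebra B] [BooleanAlgebra C]
    (hC : IsAbstractSigmaAlgebra C) (η : B → C) (hη : IsBoolHom η)
    (huniv : ∀ (D : Type v) [BooleanAlgebra D], IsAbstractSigmaAlgebra D →
      ∀ f : B → D, IsBoolHom f → ∃! g : C → D, IsSigmaMorphism g ∧ g ∘ η = f)
    {L : Set C} (hRL : Set.range η ⊆ L) (hTL : ⊤ ∈ L)
    (hcL : ∀ x ∈ L, xᶜ ∈ L)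
    (hsL : ∀ a : ℕ → C, (∀ n, a n ∈ L) → (∀ i j, i ≠ j → a i ⊓ a j = ⊥) →
      ∀ s, IsLUB (Set.range a) s → s ∈ L) :
    ∀ x, x ∈ L := by
  classical
  set Lam : Set C → Prop := fun M => Set.range η ⊆ M ∧ ⊤ ∈ M ∧ (∀ x ∈ M, xᶜ ∈ M) ∧
    ∀ a : ℕ → C, (∀ n, a n ∈ M) → (∀ i j, i ≠ j → a i ⊓ a j = ⊥) →
      ∀ s, IsLUB (Set.range a) s → s ∈ M with hLam
  set L₀ : Set C := ⋂₀ {M | Lam M} with hL₀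
  have hmin : ∀ M, Lam M → L₀ ⊆ M := fun M hM x hx => hx M hM
  have hΛ : Lam L₀ := by
    refine ⟨?_, ?_, ?_, ?_⟩
    · intro x hx M hM
      exact hM.1 hx
    · intro M hM
      exact hM.2.1
    · intro x hx M hM
      exact hM.2.2.1 x (hx M hM)
    · intro a ha hd s hs M hM
      exact hM.2.2.2 a (fun n => ha n M hM) hd s hs
  have hR₀ : Set.range η ⊆ L₀ := hΛ.1
  have hT₀ : ⊤ ∈ L₀ := hΛ.2.1
  have hc₀ : ∀ x ∈ L₀, xᶜ ∈ L₀ := hΛ.2.2.1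
  have hs₀ := hΛ.2.2.2
  have hbot : ⊥ ∈ L₀ := by
    have := hR₀ ⟨⊥, rfl⟩
    rwa [hη.1] at this
  have hpair : ∀ x ∈ L₀, ∀ y ∈ L₀, x ⊓ y = ⊥ → x ⊔ y ∈ L₀ := by
    intro x hx y hy hd
    refine hs₀ (pairSeq x y) ?_ (pairSeq_disj hd) _ (isLUB_pairSeq x y)
    intro n
    rcases n with - | - | n <;> simpa [pairSeq]
  -- Dynkin argument, generic stage
  have stage : ∀ T : Set C, T ⊆ L₀ → (∀ y ∈ T, yᶜ ∈ T) →
      (∀ (b : B), ∀ y ∈ T, η b ⊓ y ∈ L₀) →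
      ∀ x ∈ L₀, ∀ y ∈ T, x ⊓ y ∈ L₀ := by
    intro T hTsub hTc hTη
    have hM : Lam {x | x ∈ L₀ ∧ ∀ y ∈ T, x ⊓ y ∈ L₀} := by
      refine ⟨?_, ?_, ?_, ?_⟩
      · rintro x ⟨b, rfl⟩
        exact ⟨hR₀ ⟨b, rfl⟩, fun y hy => hTη b y hy⟩
      · exact ⟨hT₀, fun y hy => by rw [top_inf_eq]; exact hTsub hy⟩
      · rintro x ⟨hx, hx2⟩
        refine ⟨hc₀ x hx, fun y hy => ?_⟩
        have hid : xᶜ ⊓ y = ((x ⊓ y) ⊔ yᶜ)ᶜ := by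
          rw [compl_sup, compl_compl, compl_inf, inf_sup_right, compl_inf_eq_bot, sup_bot_eq]
        have hd : (x ⊓ y) ⊓ yᶜ = ⊥ := by
          rw [inf_assoc, inf_compl_eq_bot, inf_bot_eq]
        have hmem : (x ⊓ y) ⊔ yᶜ ∈ L₀ :=
          hpair _ (hx2 y hy) _ (hTsub (hTc y hy)) hd
        rw [hid]
        exact hc₀ _ hmem
      · rintro a ha hd s hs
        refine ⟨hs₀ a (fun n => (ha n).1) hd s hs, fun y hy => ?_⟩
        have h1 : ∀ n, y ⊓ a n ∈ L₀ := fun n => by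
          rw [inf_comm]; exact (ha n).2 y hy
        have h2 : ∀ i j, i ≠ j → (y ⊓ a i) ⊓ (y ⊓ a j) = ⊥ := fun i j hij =>
          le_bot_iff.1 ((inf_le_inf inf_le_right inf_le_right).trans (hd i j hij).le)
        have h3 := isLUB_inf hs y
        have := hs₀ _ h1 h2 _ h3
        rwa [inf_comm] at this
    intro x hx y hy
    exact (hmin _ hM hx).2 y hy
  have stage1 : ∀ x ∈ L₀, ∀ y ∈ Set.range η, x ⊓ y ∈ L₀ := by
    refine stage _ hR₀ ?_ ?_
    · rintro y ⟨b, rfl⟩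
      exact ⟨bᶜ, hη.2.2.2.2 b⟩
    · rintro b y ⟨b', rfl⟩
      rw [← hη.2.2.1]
      exact hR₀ ⟨_, rfl⟩
  have hinf : ∀ x ∈ L₀, ∀ y ∈ L₀, x ⊓ y ∈ L₀ := by
    refine stage _ le_rfl hc₀ ?_
    intro b y hy
    rw [inf_comm]
    exact stage1 y hy (η b) ⟨b, rfl⟩
  have hsupc : ∀ x ∈ L₀, ∀ y ∈ L₀, x ⊔ y ∈ L₀ := by
    intro x hx y hy
    have : x ⊔ y = (xᶜ ⊓ yᶜ)ᶜ := by rw [compl_inf, compl_compl, compl_compl]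
    rw [this]
    exact hc₀ _ (hinf _ (hc₀ x hx) _ (hc₀ y hy))
  -- closure under arbitrary countable sups
  have hσall : ∀ a : ℕ → C, (∀ n, a n ∈ L₀) → ∀ s, IsLUB (Set.range a) s → s ∈ L₀ := by
    intro a ha s hs
    have hps : ∀ n, partialSups a n ∈ L₀ := by
      intro n
      induction n with
      | zero => simpa using ha 0
      | succ n ih => rw [show n + 1 = Order.succ n from rfl, partialSups_succ]; exact hsupc _ ih _ (ha (n + 1))
    have hdm : ∀ n, disjointed a n ∈ L₀ := by
      intro n
      rcases n with - | n
      · simpa using ha 0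
      · rw [disjointed_add_one, sdiff_eq]
        exact hinf _ (ha (n + 1)) _ (hc₀ _ (hps n))
    have hdd : ∀ i j, i ≠ j → disjointed a i ⊓ disjointed a j = ⊥ := fun i j hij =>
      disjoint_iff.1 (disjoint_disjointed a hij)
    have hlub : IsLUB (Set.range (disjointed a)) s := by
      constructor
      · rintro t ⟨n, rfl⟩
        exact (disjointed_le a n).trans (hs.1 ⟨n, rfl⟩)
      · intro u hu
        refine hs.2 ?_
        rintro t ⟨n, rfl⟩
        calc a n ≤ partialSups a n := le_partialSups a n
        _ = partialSups (disjointed a) n := by rw [partialSups_disjointed]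
        _ ≤ u := partialSups_le _ _ _ fun k _ => hu ⟨k, rfl⟩
    exact hs₀ _ hdm hdd s hlub
  -- Subtype σ-algebra
  let Lt := {x : C // x ∈ L₀}
  letI : Max Lt := ⟨fun x y => ⟨x.1 ⊔ y.1, hsupc _ x.2 _ y.2⟩⟩
  letI : Min Lt := ⟨fun x y => ⟨x.1 ⊓ y.1, hinf _ x.2 _ y.2⟩⟩
  letI : Top Lt := ⟨⟨⊤, hT₀⟩⟩
  letI : Bot Lt := ⟨⟨⊥, hbot⟩⟩
  letI : Compl Lt := ⟨fun x => ⟨x.1ᶜ, hc₀ _ x.2⟩⟩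
  letI : SDiff Lt := ⟨fun x y => ⟨x.1 ⊓ y.1ᶜ, hinf _ x.2 _ (hc₀ _ y.2)⟩⟩
  letI : HImp Lt := ⟨fun x y => ⟨y.1 ⊔ x.1ᶜ, hsupc _ y.2 _ (hc₀ _ x.2)⟩⟩
  letI instBA : BooleanAlgebra Lt :=
    Function.Injective.booleanAlgebra (Subtype.val : Lt → C) Subtype.val_injective Iff.rfl Iff.rfl
      (fun _ _ => rfl) (fun _ _ => rfl) rfl rfl (fun _ => rfl)
      (fun _ _ => sdiff_eq.symm) (fun _ _ => himp_eq.symm)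
  have habs : IsAbstractSigmaAlgebra Lt := by
    intro a
    obtain ⟨s, hs⟩ := hC fun n => (a n).1
    have hsL : s ∈ L₀ := hσall _ (fun n => (a n).2) s hs
    refine ⟨⟨s, hsL⟩, ?_, ?_⟩
    · rintro t ⟨n, rfl⟩
      exact hs.1 ⟨n, rfl⟩
    · intro u hu
      exact hs.2 (by rintro t ⟨n, rfl⟩; exact hu ⟨n, rfl⟩)
  set η' : B → Lt := fun b => ⟨η b, hR₀ ⟨b, rfl⟩⟩ with hη'def
  have hη' : IsBoolHom η' := by
    refine ⟨Subtype.ext hη.1, Subtype.ext hη.2.1, fun a b => Subtype.ext (hη.2.2.1 a b),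
      fun a b => Subtype.ext (hη.2.2.2.1 a b), fun a => Subtype.ext (hη.2.2.2.2 a)⟩
  obtain ⟨g, ⟨hg, hgη⟩, -⟩ := huniv Lt habs η' hη'
  have hι : IsSigmaMorphism (Subtype.val : Lt → C) := by
    refine ⟨⟨rfl, rfl, fun _ _ => rfl, fun _ _ => rfl, fun _ => rfl⟩, ?_⟩
    intro a s hs
    obtain ⟨t, ht⟩ := hC fun n => (a n).1
    have htL : t ∈ L₀ := hσall _ (fun n => (a n).2) t ht
    have hub : (⟨t, htL⟩ : Lt) ∈ upperBounds (Set.range a) := by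
      rintro w ⟨n, rfl⟩
      exact ht.1 ⟨n, rfl⟩
    have h1 : s.1 ≤ t := hs.2 hub
    have h2 : t ≤ s.1 := ht.2 (by rintro w ⟨n, rfl⟩; exact hs.1 ⟨n, rfl⟩)
    have : t = s.1 := le_antisymm h2 h1
    exact this ▸ ht
  obtain ⟨G, -, hGuniq⟩ := huniv C hC η hη
  have e1 : (Subtype.val ∘ g) = G := by
    refine hGuniq _ ⟨hι.comp hg, ?_⟩
    funext b
    simp only [Function.comp_apply]
    have hb := congrFun hgη b
    simp only [Function.comp_apply] at hb
    rw [hb]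
  have e2 : (id : C → C) = G := by
    refine hGuniq _ ⟨isSigmaMorphism_id, by funext b; simp⟩
  have hall : ∀ x, x ∈ L₀ := by
    intro x
    have : (g x).1 = x := by
      rw [show (g x).1 = (Subtype.val ∘ g) x from rfl, e1, ← e2]; rfl
    rw [← this]
    exact (g x).2
  intro x
  exact hmin L ⟨hRL, hTL, hcL, hsL⟩ (hall x)



/-- Every additive `[0,1]`-valued function on a Boolean algebra `B` extends
uniquely to a measure on the free abstract σ-algebra `CB(B)` on `B`, and the
extension again takes values in `[0,1]`. -/
theorem exists_unique_measure_on_free {B : Type u} {C : Type v}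
    [BooleanAlgebra B] [BooleanAlgebra C]
    (hC : IsAbstractSigmaAlgebra C) (η : B → C) (hη : IsBoolHom η)
    (huniv : ∀ (D : Type v) [BooleanAlgebra D], IsAbstractSigmaAlgebra D →
      ∀ f : B → D, IsBoolHom f → ∃! g : C → D, IsSigmaMorphism g ∧ g ∘ η = f)
    (μ₀ : B → ℝ≥0∞) (h0 : μ₀ ⊥ = 0) (h1 : μ₀ ⊤ ≤ 1)
    (hadd : ∀ a b : B, a ⊓ b = ⊥ → μ₀ (a ⊔ b) = μ₀ a + μ₀ b) :
    ∃ μ : C → ℝ≥0∞, (IsMeasureOn μ ∧ μ ∘ η = μ₀) ∧ (∀ x, μ x ≤ 1) ∧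
      ∀ ν : C → ℝ≥0∞, IsMeasureOn ν ∧ ν ∘ η = μ₀ → ν = μ := by
  classical
  choose csup hcsup using hC
  -- Step 1: a "compactness" property of the free σ-algebra, via homs to `LiftProp`.
  have key : ∀ (b : B) (bs : ℕ → B) (s : C), IsLUB (Set.range fun n => η (bs n)) s →
      η b ≤ s → ∃ F : Finset ℕ, b ≤ F.sup bs := by
    intro b bs s hs hbs
    by_contra hcon
    push_neg at hcon
    obtain ⟨x, hx, hxb, hxbs⟩ := exists_hom_prop hcon
    set f : B → LiftProp.{v} := fun a => ⟨x a⟩ with hfdef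
    have hf : IsBoolHom f :=
      ⟨congrArg LiftProp.mk hx.1, congrArg LiftProp.mk hx.2.1,
        fun a b => congrArg LiftProp.mk (hx.2.2.1 a b),
        fun a b => congrArg LiftProp.mk (hx.2.2.2.1 a b),
        fun a => congrArg LiftProp.mk (hx.2.2.2.2 a)⟩
    obtain ⟨g, ⟨hg, hgη⟩, -⟩ := huniv LiftProp.{v} LiftProp.sigma f hf
    have hlub : IsLUB (Set.range fun n => g (η (bs n))) (g s) := hg.2 _ _ hs
    have hbotub : g s ≤ ⊥ := by
      refine hlub.2 ?_
      rintro t ⟨n, rfl⟩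
      show g (η (bs n)) ≤ ⊥
      have hb' := congrFun hgη (bs n)
      simp only [Function.comp_apply] at hb'
      rw [hb']
      exact LiftProp.le_iff.2 fun hp => absurd hp (hxbs n)
    have h2 : g (η b) ≤ g s := hg.1.monotone hbs
    have hb'' := congrFun hgη b
    simp only [Function.comp_apply] at hb''
    rw [hb''] at h2
    have h3 : (⊥ : LiftProp.{v}).p := LiftProp.le_iff.1 (h2.trans hbotub) hxb
    simpa [LiftProp.bot_p] using h3
  -- Step 2: the outer measure
  set μS : C → ℝ≥0∞ :=
    fun x => ⨅ (bb : ℕ → B) (_ : x ≤ csup fun n => η (bb n)), ∑' n, μ₀ (bb n) with hμSdef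
  have μS_le : ∀ (x : C) (bb : ℕ → B), x ≤ csup (fun n => η (bb n)) →
      μS x ≤ ∑' n, μ₀ (bb n) := fun x bb h => iInf_le_of_le bb (iInf_le _ h)
  have le_μS : ∀ (x : C) (c : ℝ≥0∞),
      (∀ bb : ℕ → B, x ≤ csup (fun n => η (bb n)) → c ≤ ∑' n, μ₀ (bb n)) → c ≤ μS x :=
    fun x c h => le_iInf fun bb => le_iInf fun hb => h bb hb
  have μS_mono : ∀ {x y : C}, x ≤ y → μS x ≤ μS y := by
    intro x y hxy
    refine le_iInf fun bb => le_iInf fun hb => μS_le x bb (hxy.trans hb)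
  have heta : ∀ b : B, μS (η b) = μ₀ b := by
    intro b
    refine le_antisymm ?_ ?_
    · have hcov : η b ≤ csup fun n => η (pairSeq b ⊥ n) :=
        (hcsup fun n => η (pairSeq b ⊥ n)).1 ⟨0, rfl⟩
      calc μS (η b) ≤ ∑' n, μ₀ (pairSeq b ⊥ n) := μS_le _ _ hcov
      _ = μ₀ b + μ₀ ⊥ := tsum_pairSeq h0 b ⊥
      _ = μ₀ b := by rw [h0, add_zero]
    · refine le_μS _ _ fun bb hb => ?_
      obtain ⟨F, hF⟩ := key b bb _ (hcsup fun n => η (bb n)) hb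
      calc μ₀ b ≤ μ₀ (F.sup bb) := mu0_mono hadd hF
      _ ≤ ∑ i ∈ F, μ₀ (bb i) := mu0_finset_subadd h0 hadd F bb
      _ ≤ ∑' n, μ₀ (bb n) := ENNReal.sum_le_tsum F
  have hμbot : μS ⊥ = 0 := by
    have : μS (η ⊥) = μ₀ ⊥ := heta ⊥
    rwa [hη.1, h0] at this
  -- countable subadditivity
  have hsub : ∀ (a : ℕ → C) (t s : C), IsLUB (Set.range a) s → t ≤ s →
      μS t ≤ ∑' n, μS (a n) := by
    intro a t s hs hts
    refine ENNReal.le_of_forall_pos_le_add fun ε hε hfin => ?_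
    obtain ⟨δ, hδpos, hδsum⟩ :=
      ENNReal.exists_pos_sum_of_countable (by exact_mod_cast hε.ne' : (ε : ℝ≥0∞) ≠ 0) ℕ
    have hexists : ∀ n : ℕ, ∃ bb : ℕ → B,
        a n ≤ csup (fun k => η (bb k)) ∧ ∑' k, μ₀ (bb k) ≤ μS (a n) + δ n := by
      intro n
      have hfin' : μS (a n) ≠ ∞ :=
        (lt_of_le_of_lt (ENNReal.le_tsum n) hfin).ne
      have hlt : μS (a n) < μS (a n) + δ n :=
        ENNReal.lt_add_right hfin' (by exact_mod_cast (hδpos n).ne')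
      rw [hμSdef] at hlt
      obtain ⟨bb, hbb⟩ := iInf_lt_iff.1 hlt
      obtain ⟨hcov, hval⟩ := iInf_lt_iff.1 hbb
      exact ⟨bb, hcov, hval.le⟩
    choose bbs hcov hval using hexists
    set e : ℕ × ℕ ≃ ℕ := Denumerable.eqv (ℕ × ℕ) with hedef
    set BB : ℕ → B := fun m => bbs (e.symm m).1 (e.symm m).2 with hBBdef
    have hBBcov : t ≤ csup fun m => η (BB m) := by
      refine hts.trans (hs.2 ?_)
      rintro w ⟨n, rfl⟩
      refine (hcov n).trans ((hcsup fun k => η (bbs n k)).2 ?_)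
      rintro w ⟨k, rfl⟩
      show η (bbs n k) ≤ csup fun m => η (BB m)
      have hBBk : BB (e (n, k)) = bbs n k := by simp [hBBdef]
      calc η (bbs n k) = η (BB (e (n, k))) := by rw [hBBk]
      _ ≤ csup fun m => η (BB m) := (hcsup fun m => η (BB m)).1 ⟨e (n, k), rfl⟩
    calc μS t ≤ ∑' m, μ₀ (BB m) := μS_le _ _ hBBcov
    _ = ∑' p : ℕ × ℕ, μ₀ (bbs p.1 p.2) := by
        rw [← Equiv.tsum_eq e.symm (fun p : ℕ × ℕ => μ₀ (bbs p.1 p.2))]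
    _ = ∑' n, ∑' k, μ₀ (bbs n k) := ENNReal.tsum_prod (f := fun n k => μ₀ (bbs n k))
    _ ≤ ∑' n, (μS (a n) + δ n) := ENNReal.tsum_le_tsum fun n => hval n
    _ = ∑' n, μS (a n) + ∑' n, (δ n : ℝ≥0∞) := ENNReal.tsum_add
    _ ≤ ∑' n, μS (a n) + ε := add_le_add_right hδsum.le _
  have hsub2 : ∀ x y : C, μS (x ⊔ y) ≤ μS x + μS y := by
    intro x y
    calc μS (x ⊔ y) ≤ ∑' n, μS (pairSeq x y n) :=
      hsub (pairSeq x y) _ _ (isLUB_pairSeq x y) le_rfl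
    _ = μS x + μS y := tsum_pairSeq hμbot x y
  -- Carathéodory measurable elements
  set Meas : Set C := {c | ∀ x, μS (x ⊓ c) + μS (x ⊓ cᶜ) ≤ μS x} with hMeasdef
  have hMeta : ∀ b : B, η b ∈ Meas := by
    intro b x
    refine le_μS _ _ fun bb hb => ?_
    have hdist : ∀ c : B, csup (fun k => η (bb k ⊓ c)) = η c ⊓ csup fun k => η (bb k) := by
      intro c
      have h1 : IsLUB (Set.range fun k => η c ⊓ η (bb k)) (η c ⊓ csup fun k => η (bb k)) :=
        isLUB_inf (hcsup fun k => η (bb k)) (η c)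
      have h2 : (Set.range fun k => η (bb k ⊓ c)) = Set.range fun k => η c ⊓ η (bb k) := by
        have heq : (fun k => η (bb k ⊓ c)) = fun k => η c ⊓ η (bb k) := by
          funext k
          rw [hη.2.2.1, inf_comm]
        rw [heq]
      exact IsLUB.unique (h2 ▸ hcsup fun k => η (bb k ⊓ c)) h1
    have hc1 : x ⊓ η b ≤ csup fun k => η (bb k ⊓ b) := by
      rw [hdist b]
      calc x ⊓ η b ≤ (csup fun k => η (bb k)) ⊓ η b := inf_le_inf_right _ hb
      _ = η b ⊓ csup fun k => η (bb k) := inf_comm ..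
    have hc2 : x ⊓ (η b)ᶜ ≤ csup fun k => η (bb k ⊓ bᶜ) := by
      rw [hdist bᶜ, hη.2.2.2.2]
      calc x ⊓ (η b)ᶜ ≤ (csup fun k => η (bb k)) ⊓ (η b)ᶜ := inf_le_inf_right _ hb
      _ = (η b)ᶜ ⊓ csup fun k => η (bb k) := inf_comm ..
    calc μS (x ⊓ η b) + μS (x ⊓ (η b)ᶜ)
        ≤ (∑' k, μ₀ (bb k ⊓ b)) + ∑' k, μ₀ (bb k ⊓ bᶜ) :=
          add_le_add (μS_le _ _ hc1) (μS_le _ _ hc2)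
    _ = ∑' k, (μ₀ (bb k ⊓ b) + μ₀ (bb k ⊓ bᶜ)) := ENNReal.tsum_add.symm
    _ = ∑' k, μ₀ (bb k) := by
        refine tsum_congr fun k => ?_
        have hd : (bb k ⊓ b) ⊓ (bb k ⊓ bᶜ) = ⊥ :=
          le_bot_iff.1 ((inf_le_inf inf_le_right inf_le_right).trans_eq inf_compl_eq_bot)
        rw [← hadd _ _ hd, ← inf_sup_left, sup_compl_eq_top, inf_top_eq]
  have hMc : ∀ c ∈ Meas, cᶜ ∈ Meas := by
    intro c hc x
    have := hc x
    rwa [compl_compl, add_comm]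
  have hMtop : (⊤ : C) ∈ Meas := by
    intro x
    rw [inf_top_eq, compl_top, inf_bot_eq, hμbot, add_zero]
  -- partial-sum estimate
  have hMsum : ∀ (c : ℕ → C), (∀ n, c n ∈ Meas) → (∀ i j, i ≠ j → c i ⊓ c j = ⊥) →
      ∀ (x : C) (N : ℕ),
        ∑ n ∈ Finset.range N, μS (x ⊓ c n) + μS (x ⊓ ((Finset.range N).sup c)ᶜ) ≤ μS x := by
    intro c hc hd x N
    induction N with
    | zero => simp
    | succ N ih =>
        have hdisjN : c N ≤ (((Finset.range N).sup c))ᶜ := by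
          rw [le_compl_iff_disjoint_right]
          refine Finset.disjoint_sup_right.2 fun k hk => ?_
          rw [disjoint_iff]
          exact hd N k (Finset.mem_range.1 hk).ne'
        have step := hc N (x ⊓ ((Finset.range N).sup c)ᶜ)
        have e1 : x ⊓ ((Finset.range N).sup c)ᶜ ⊓ c N = x ⊓ c N := by
          rw [inf_assoc]
          congr 1
          exact inf_eq_right.2 hdisjN
        have e2 : x ⊓ ((Finset.range N).sup c)ᶜ ⊓ (c N)ᶜ
            = x ⊓ (((Finset.range (N + 1)).sup c))ᶜ := by
          rw [inf_assoc, ← compl_sup, Finset.range_add_one, Finset.sup_insert, sup_comm]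
        rw [e1, e2] at step
        calc ∑ n ∈ Finset.range (N + 1), μS (x ⊓ c n)
              + μS (x ⊓ ((Finset.range (N + 1)).sup c)ᶜ)
            = ∑ n ∈ Finset.range N, μS (x ⊓ c n)
              + (μS (x ⊓ c N) + μS (x ⊓ ((Finset.range (N + 1)).sup c)ᶜ)) := by
              rw [Finset.sum_range_succ, add_assoc]
        _ ≤ ∑ n ∈ Finset.range N, μS (x ⊓ c n) + μS (x ⊓ ((Finset.range N).sup c)ᶜ) :=
              add_le_add_right step _
        _ ≤ μS x := ih
  have hkey1 : ∀ (c : ℕ → C), (∀ n, c n ∈ Meas) → (∀ i j, i ≠ j → c i ⊓ c j = ⊥) →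
      ∀ (s : C), IsLUB (Set.range c) s →
      ∀ x, ∑' n, μS (x ⊓ c n) + μS (x ⊓ sᶜ) ≤ μS x := by
    intro c hc hd s hs x
    rw [ENNReal.tsum_eq_iSup_nat, ENNReal.iSup_add]
    refine iSup_le fun N => ?_
    have h1 : μS (x ⊓ sᶜ) ≤ μS (x ⊓ ((Finset.range N).sup c)ᶜ) := by
      refine μS_mono (inf_le_inf_left x (compl_le_compl ?_))
      exact Finset.sup_le fun k _ => hs.1 ⟨k, rfl⟩
    exact (add_le_add_right h1 _).trans (hMsum c hc hd x N)
  have hC' : IsAbstractSigmaAlgebra C := fun a => ⟨csup a, hcsup a⟩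
  -- everything is measurable
  have hMall : ∀ x : C, x ∈ Meas := by
    refine lambda_univ hC' η hη huniv ?_ hMtop hMc ?_
    · rintro y ⟨b, rfl⟩
      exact hMeta b
    · intro a ha hd s hs x
      have hxs : μS (x ⊓ s) ≤ ∑' n, μS (x ⊓ a n) :=
        hsub (fun n => x ⊓ a n) (x ⊓ s) (x ⊓ s) (isLUB_inf hs x) le_rfl
      calc μS (x ⊓ s) + μS (x ⊓ sᶜ) ≤ ∑' n, μS (x ⊓ a n) + μS (x ⊓ sᶜ) :=
        add_le_add_left hxs _
      _ ≤ μS x := hkey1 a ha hd s hs x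
  -- μS is a measure
  have hmeasure : IsMeasureOn μS := by
    refine ⟨hμbot, fun a hd s hs => ?_⟩
    refine le_antisymm (hsub a s s hs le_rfl) ?_
    have h2 := hkey1 a (fun n => hMall (a n)) hd s hs s
    rw [inf_compl_eq_bot, hμbot, add_zero] at h2
    calc ∑' n, μS (a n) = ∑' n, μS (s ⊓ a n) :=
      tsum_congr fun n => by rw [inf_eq_right.2 (hs.1 ⟨n, rfl⟩)]
    _ ≤ μS s := h2
  have hb1 : ∀ x, μS x ≤ 1 := by
    intro x
    calc μS x ≤ μS ⊤ := μS_mono le_top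
    _ = μ₀ ⊤ := by rw [← hη.2.1, heta]
    _ ≤ 1 := h1
  have htopeq : ∀ (ν : C → ℝ≥0∞), ν ∘ η = μ₀ → ν ⊤ = μS ⊤ := by
    intro ν hνη
    rw [← hη.2.1]
    exact (congrFun hνη ⊤).trans (heta ⊤).symm
  refine ⟨μS, ⟨hmeasure, funext heta⟩, hb1, ?_⟩
  rintro ν ⟨hν, hνη⟩
  have hLν : ∀ x : C, x ∈ {y : C | ν y = μS y} := by
    refine lambda_univ hC' η hη huniv ?_ ?_ ?_ ?_
    · rintro y ⟨b, rfl⟩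
      exact (congrFun hνη b).trans (heta b).symm
    · exact htopeq ν hνη
    · intro y hy
      have hmem : ν y = μS y := hy
      have hν2 : ν y + ν yᶜ = μS y + μS yᶜ := by
        rw [← hν.pair inf_compl_eq_bot, ← hmeasure.pair inf_compl_eq_bot, sup_compl_eq_top]
        exact htopeq ν hνη
      rw [hmem] at hν2
      have hfin : μS y ≠ ∞ := ((hb1 y).trans_lt ENNReal.one_lt_top).ne
      exact (ENNReal.add_right_inj hfin).1 hν2
    · intro a ha hd s hs
      show ν s = μS s
      rw [hν.2 a hd s hs, hmeasure.2 a hd s hs]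
      exact tsum_congr fun n => ha n
  funext x
  exact hLν x
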